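/- arXiv:2506.17567 — 6 statements merged into one kernel-verified Lean document; each statement's English description precedes it below -/
import Mathlib

section
/- Let V be a real vector space with a symmetric bilinear form (·,·), let H ∈ V satisfy (H·H) = 2n, and for i = 1,2 let u_i = (r_i, ξ_i, a_i) be Mukai vectors with ξ_i = d_i H + D_i where (D_i·H) = 0 and r_i, d_i, a_i ∈ ℝ. Assume each u_i is isotropic, i.e. (ξ_i·ξ_i) = 2 r_i a_i. Then d_1 d_2 ⟨u_1,u_2⟩ = −(1/2)·((d_2 D_1 − d_1 D_2)·(d_2 D_1 − d_1 D_2)) + (d_2 r_1 − d_1 r_2)(d_2 a_1 − d_1 a_2). -/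
/-- Lemma 5.4: for isotropic Mukai vectors `uᵢ = (rᵢ, dᵢ H + Dᵢ, aᵢ)`
with `Dᵢ ⊥ H` and `(H·H) = 2n`, one has
`d₁ d₂ ⟨u₁,u₂⟩ = −(1/2)((d₂D₁ − d₁D₂)²) + (d₂r₁ − d₁r₂)(d₂a₁ − d₁a₂)`. -/
theorem stmt0 {V : Type*} [AddCommGroup V] [Module ℝ V]
    (B : V →ₗ[ℝ] V →ₗ[ℝ] ℝ) (hsymm : ∀ x y, B x y = B y x)
    (H : V) (n : ℝ) (hH : B H H = 2 * n)
    (r₁ d₁ a₁ r₂ d₂ a₂ : ℝ) (D₁ D₂ : V)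
    (hD₁ : B D₁ H = 0) (hD₂ : B D₂ H = 0)
    (hiso₁ : B (d₁ • H + D₁) (d₁ • H + D₁) = 2 * r₁ * a₁)
    (hiso₂ : B (d₂ • H + D₂) (d₂ • H + D₂) = 2 * r₂ * a₂) :
    d₁ * d₂ * (B (d₁ • H + D₁) (d₂ • H + D₂) - r₁ * a₂ - r₂ * a₁) =
      -(1 / 2) * B (d₂ • D₁ - d₁ • D₂) (d₂ • D₁ - d₁ • D₂) +
        (d₂ * r₁ - d₁ * r₂) * (d₂ * a₁ - d₁ * a₂) := by
  have h1 := hsymm H D₁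
  have h2 := hsymm H D₂
  have h3 := hsymm D₁ D₂
  simp only [map_add, map_sub, map_smul, LinearMap.add_apply, LinearMap.sub_apply,
    LinearMap.smul_apply, smul_eq_mul, h1, h2, hD₁, hD₂, hH] at *
  linear_combination ((d₂^2)/2)*hiso₁ + ((d₁^2)/2)*hiso₂ + (d₁*d₂/2)*h3
end

section
/- Let V be a real vector space with a symmetric bilinear form (·,·), let H ∈ V satisfy (H·H) = 2n with n > 0, and assume (·,·) is negative semidefinite on H^⊥ = {D ∈ V : (D·H) = 0} (Hodge index condition). For i = 1,2 let u_i = (r_i, d_i H + D_i, a_i) be isotropic Mukai vectors with (D_i·H) = 0 and d_1, d_2 > 0. If ⟨u_1,u_2⟩ ≤ 0, then (d_2 r_1 − d_1 r_2)(d_2 a_1 − d_1 a_2) ≤ 0; in particular, if moreover d_2 r_1 − d_1 r_2 > 0 then d_2 a_1 − d_1 a_2 ≤ 0, and if d_2 r_1 − d_1 r_2 < 0 then d_2 a_1 − d_1 a_2 ≥ 0. -/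
/-- With the Hodge-index condition (negative semidefiniteness of the
intersection form on `H^⊥`), for isotropic Mukai vectors `uᵢ = (rᵢ, dᵢH + Dᵢ, aᵢ)`
with `d₁, d₂ > 0` and `⟨u₁,u₂⟩ ≤ 0`, one has `(d₂r₁ − d₁r₂)(d₂a₁ − d₁a₂) ≤ 0`,
and the two resulting sign implications. -/
theorem stmt1 {V : Type*} [AddCommGroup V] [Module ℝ V]
    (B : V →ₗ[ℝ] V →ₗ[ℝ] ℝ) (hsymm : ∀ x y, B x y = B y x)
    (H : V) (n : ℝ) (hn : 0 < n) (hH : B H H = 2 * n)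
    (hneg : ∀ D : V, B D H = 0 → B D D ≤ 0)
    (r₁ d₁ a₁ r₂ d₂ a₂ : ℝ) (D₁ D₂ : V)
    (hD₁ : B D₁ H = 0) (hD₂ : B D₂ H = 0)
    (hd₁ : 0 < d₁) (hd₂ : 0 < d₂)
    (hiso₁ : B (d₁ • H + D₁) (d₁ • H + D₁) = 2 * r₁ * a₁)
    (hiso₂ : B (d₂ • H + D₂) (d₂ • H + D₂) = 2 * r₂ * a₂)
    (hpair : B (d₁ • H + D₁) (d₂ • H + D₂) - r₁ * a₂ - r₂ * a₁ ≤ 0) :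
    (d₂ * r₁ - d₁ * r₂) * (d₂ * a₁ - d₁ * a₂) ≤ 0 ∧
    (0 < d₂ * r₁ - d₁ * r₂ → d₂ * a₁ - d₁ * a₂ ≤ 0) ∧
    (d₂ * r₁ - d₁ * r₂ < 0 → 0 ≤ d₂ * a₁ - d₁ * a₂) := by
  have hHD₁ : B H D₁ = 0 := (hsymm H D₁).trans hD₁
  have hHD₂ : B H D₂ = 0 := (hsymm H D₂).trans hD₂
  have hEH : B (d₂ • D₁ - d₁ • D₂) H = 0 := by
    simp [map_sub, map_smul, hD₁, hD₂]
  have hEE : B (d₂ • D₁ - d₁ • D₂) (d₂ • D₁ - d₁ • D₂) ≤ 0 := hneg _ hEH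
  have hs : B D₂ D₁ = B D₁ D₂ := hsymm D₂ D₁
  simp only [map_add, map_smul, map_sub, LinearMap.add_apply, LinearMap.smul_apply,
    LinearMap.sub_apply, smul_eq_mul, hH, hD₁, hD₂, hHD₁, hHD₂, hs] at hiso₁ hiso₂ hpair hEE
  have key : (d₂ * r₁ - d₁ * r₂) * (d₂ * a₁ - d₁ * a₂) ≤ 0 := by
    nlinarith [mul_pos hd₁ hd₂, sq_nonneg d₁, sq_nonneg d₂, hEE, mul_nonneg (mul_pos hd₁ hd₂).le (neg_nonneg.mpr hpair)]
  refine ⟨key, ?_, ?_⟩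
  · intro h
    by_contra h'
    push_neg at h'
    nlinarith
  · intro h
    by_contra h'
    push_neg at h'
    nlinarith
end

section
/- Let v = (r, ξ, a) be a Mukai vector admitting a decomposition v = ℓ v₁ + v₂ with v₁ = (r₁, ξ₁, a₁), v₂ = (r₂, ξ₂, a₂), where ℓ ≥ 1 is an integer, ⟨v₁,v₁⟩ = ⟨v₂,v₂⟩ = 0, ⟨v₁,v₂⟩ = 1, and r₁, r₂ ≥ 1. Then ⟨v,v⟩ = 2ℓ and 2r > ⟨v,v⟩. Consequently, if ⟨v,v⟩ ≥ 2r then no such decomposition exists. -/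
/-- The Mukai pairing on `ℤ ⊕ N ⊕ ℤ`:
`⟨(r₁,ξ₁,a₁),(r₂,ξ₂,a₂)⟩ = (ξ₁·ξ₂) − r₁a₂ − r₂a₁`. -/
def mukaiPair {N : Type*} [AddCommGroup N] [Module ℤ N]
    (B : N →ₗ[ℤ] N →ₗ[ℤ] ℤ) (v w : ℤ × N × ℤ) : ℤ :=
  B v.2.1 w.2.1 - v.1 * w.2.2 - w.1 * v.2.2

/-- If `v = ℓ v₁ + v₂` with `v₁, v₂` isotropic, `⟨v₁,v₂⟩ = 1`,
`ℓ ≥ 1` and both ranks `≥ 1`, then `⟨v,v⟩ = 2ℓ` and `2r > ⟨v,v⟩`; consequently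
such a decomposition cannot exist when `⟨v,v⟩ ≥ 2r`. -/
theorem stmt2 {N : Type*} [AddCommGroup N] [Module ℤ N]
    (B : N →ₗ[ℤ] N →ₗ[ℤ] ℤ) (hsymm : ∀ x y, B x y = B y x)
    (ℓ : ℤ) (hℓ : 1 ≤ ℓ) (v v₁ v₂ : ℤ × N × ℤ)
    (hdec : v = ℓ • v₁ + v₂)
    (h₁ : mukaiPair B v₁ v₁ = 0) (h₂ : mukaiPair B v₂ v₂ = 0)
    (h₁₂ : mukaiPair B v₁ v₂ = 1)
    (hr₁ : 1 ≤ v₁.1) (hr₂ : 1 ≤ v₂.1) :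
    mukaiPair B v v = 2 * ℓ ∧ 2 * v.1 > mukaiPair B v v ∧
      (mukaiPair B v v ≥ 2 * v.1 → False) := by
  obtain ⟨r₁, ξ₁, a₁⟩ := v₁
  obtain ⟨r₂, ξ₂, a₂⟩ := v₂
  subst hdec
  simp only [mukaiPair, Prod.smul_fst, Prod.smul_snd, Prod.fst_add, Prod.snd_add,
    smul_eq_mul, map_add, map_smul, map_zsmul, LinearMap.add_apply,
    LinearMap.smul_apply, zsmul_eq_mul] at *
  have hs := hsymm ξ₁ ξ₂
  have key : ℓ * (ℓ * B ξ₁ ξ₁) + ℓ * B ξ₂ ξ₁ + (ℓ * B ξ₁ ξ₂ + B ξ₂ ξ₂) -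
      (ℓ * r₁ + r₂) * (ℓ * a₁ + a₂) - (ℓ * r₁ + r₂) * (ℓ * a₁ + a₂) = 2 * ℓ := by
    linear_combination ℓ^2 * h₁ + h₂ + 2*ℓ*h₁₂ - ℓ*hs
  constructor
  · linarith [key]
  constructor
  · nlinarith [key, hℓ, hr₁, hr₂]
  · intro h; nlinarith [key, hℓ, hr₁, hr₂]
end

section
/- Let ℓ₁, ℓ₂, ℓ₁′, ℓ₂′ be positive rationals with ℓ₁ℓ₂ = ℓ₁′ℓ₂′ = ℓ, and let r₁, r₂, r₁′, r₂′, d₁, d₂, d₁′, d₂′ be rationals satisfying r := ℓ₁r₁ + ℓ₂r₂ = ℓ₁′r₁′ + ℓ₂′r₂′ and d := ℓ₁d₁ + ℓ₂d₂ = ℓ₁′d₁′ + ℓ₂′d₂′. Assume r₁d₁′ − r₁′d₁ > 0, r₂′d₂ − r₂d₂′ ≥ 0, and r₁′d − r d₁′ > 0. Then r₁d₂ − r₂d₁ > r₁′d₂′ − r₂′d₁′ > 0. -/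
/-- The Proposition of Section 5.1 of the paper: comparison of
`r₁d₂ − r₂d₁` and `r₁′d₂′ − r₂′d₁′` at two adjacent totally semi-stable walls. -/
theorem stmt4 (ℓ ℓ₁ ℓ₂ ℓ₁' ℓ₂' r₁ r₂ r₁' r₂' d₁ d₂ d₁' d₂' r d : ℚ)
    (hℓ₁ : 0 < ℓ₁) (hℓ₂ : 0 < ℓ₂) (hℓ₁' : 0 < ℓ₁') (hℓ₂' : 0 < ℓ₂')
    (hℓ : ℓ₁ * ℓ₂ = ℓ) (hℓ' : ℓ₁' * ℓ₂' = ℓ)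
    (hr : r = ℓ₁ * r₁ + ℓ₂ * r₂) (hr' : r = ℓ₁' * r₁' + ℓ₂' * r₂')
    (hd : d = ℓ₁ * d₁ + ℓ₂ * d₂) (hd' : d = ℓ₁' * d₁' + ℓ₂' * d₂')
    (h1 : 0 < r₁ * d₁' - r₁' * d₁) (h2 : 0 ≤ r₂' * d₂ - r₂ * d₂')
    (h3 : 0 < r₁' * d - r * d₁') :
    r₁ * d₂ - r₂ * d₁ > r₁' * d₂' - r₂' * d₁' ∧ r₁' * d₂' - r₂' * d₁' > 0 := by
  have hB : r₁' * d - r * d₁' = ℓ₂' * (r₁' * d₂' - r₂' * d₁') := by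
    rw [hr', hd']; ring
  have hBpos : 0 < r₁' * d₂' - r₂' * d₁' := by
    rw [hB] at h3
    nlinarith [h3, hℓ₂']
  have key : ℓ₂ * ℓ₂' * (r₂' * d₂ - r₂ * d₂') + ℓ₁ * ℓ₁' * (r₁ * d₁' - r₁' * d₁)
      = ℓ * (r₁ * d₂ - r₂ * d₁) - ℓ * (r₁' * d₂' - r₂' * d₁') := by
    linear_combination (-(d - ℓ₁*d₁))*hr' - (ℓ₂'*r₂')*hd + (d - ℓ₁'*d₁')*hr + (ℓ₂*r₂)*hd'
      + (r₁*d₂ - r₂*d₁)*hℓ - (r₁'*d₂' - r₂'*d₁')*hℓ' + ℓ₁*r₁*hd - ℓ₁*d₁*hr - ℓ₁'*r₁'*hd' + ℓ₁'*d₁'*hr'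
  have hℓpos : 0 < ℓ := by rw [← hℓ]; positivity
  have hdiff : 0 < ℓ * (r₁ * d₂ - r₂ * d₁) - ℓ * (r₁' * d₂' - r₂' * d₁') := by
    rw [← key]
    have := mul_pos (mul_pos hℓ₁ hℓ₁') h1
    have := mul_nonneg (mul_pos hℓ₂ hℓ₂').le h2
    linarith
  refine ⟨?_, hBpos⟩
  nlinarith [hdiff, hℓpos]
end

section
/- Let ℓ₁, ℓ₂, ℓ₁′, ℓ₂′ be positive rationals with ℓ₁ℓ₂ = ℓ₁′ℓ₂′ = ℓ, and let a₁, a₂, a₁′, a₂′, d₁, d₂, d₁′, d₂′ be rationals satisfying a := ℓ₁a₁ + ℓ₂a₂ = ℓ₁′a₁′ + ℓ₂′a₂′ and d := ℓ₁d₁ + ℓ₂d₂ = ℓ₁′d₁′ + ℓ₂′d₂′. Assume a₁′d₁ − a₁d₁′ ≥ 0 and d₂′a₂ − a₂′d₂ ≥ 0 with at least one of these two inequalities strict, and assume a₁d − a d₁ > 0. Then a₁′d₂′ − a₂′d₁′ > a₁d₂ − a₂d₁ > 0. -/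
set_option maxHeartbeats 1600000 in
/-- Lemma 5.5(3) of the paper: comparison of
`a₁d₂ − a₂d₁` and `a₁′d₂′ − a₂′d₁′` at two adjacent totally semi-stable walls. -/
theorem stmt5 (ℓ ℓ₁ ℓ₂ ℓ₁' ℓ₂' a₁ a₂ a₁' a₂' d₁ d₂ d₁' d₂' a d : ℚ)
    (hℓ₁ : 0 < ℓ₁) (hℓ₂ : 0 < ℓ₂) (hℓ₁' : 0 < ℓ₁') (hℓ₂' : 0 < ℓ₂')
    (hℓ : ℓ₁ * ℓ₂ = ℓ) (hℓ' : ℓ₁' * ℓ₂' = ℓ)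
    (ha : a = ℓ₁ * a₁ + ℓ₂ * a₂) (ha' : a = ℓ₁' * a₁' + ℓ₂' * a₂')
    (hd : d = ℓ₁ * d₁ + ℓ₂ * d₂) (hd' : d = ℓ₁' * d₁' + ℓ₂' * d₂')
    (h1 : 0 ≤ a₁' * d₁ - a₁ * d₁') (h2 : 0 ≤ d₂' * a₂ - a₂' * d₂)
    (hstrict : 0 < a₁' * d₁ - a₁ * d₁' ∨ 0 < d₂' * a₂ - a₂' * d₂)
    (h3 : 0 < a₁ * d - a * d₁) :
    a₁' * d₂' - a₂' * d₁' > a₁ * d₂ - a₂ * d₁ ∧ a₁ * d₂ - a₂ * d₁ > 0 := by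
  set H1 := a₁' * d₁ - a₁ * d₁' with hH1
  set H2 := d₂' * a₂ - a₂' * d₂ with hH2
  set X := a₁ * d₂' - a₂' * d₁ with hX
  set Y := a₁' * d₂ - a₂ * d₁' with hY
  set Δ := a₁ * d₂ - a₂ * d₁ with hΔ
  set Δ' := a₁' * d₂' - a₂' * d₁' with hΔ'
  -- basic identities
  have e1 : ℓ₂ * Δ = a₁ * d - a * d₁ := by rw [ha, hd, hΔ]; ring
  have hΔpos : 0 < Δ := by
    have : 0 < ℓ₂ * Δ := e1 ▸ h3
    nlinarith
  have e2 : ℓ₂' * X = ℓ₂ * Δ + ℓ₁' * H1 := by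
    have : a₁ * d - a * d₁ = ℓ₂' * X - ℓ₁' * H1 := by rw [ha', hd']; ring
    linarith [e1, this]
  have hXpos : 0 < X := by
    have h : 0 < ℓ₂' * X := by nlinarith [mul_pos hℓ₂ hΔpos, mul_nonneg hℓ₁'.le h1]
    nlinarith
  have e3 : ℓ₁' * Y = ℓ₁ * Δ + ℓ₂' * H2 := by
    have t1 : ℓ₁ * Δ = a * d₂ - a₂ * d := by rw [ha, hd, hΔ]; ring
    have t2 : a * d₂ - a₂ * d = ℓ₁' * Y - ℓ₂' * H2 := by rw [ha', hd']; ring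
    linarith
  have hYpos : 0 < Y := by
    have h : 0 < ℓ₁' * Y := by nlinarith [mul_pos hℓ₁ hΔpos, mul_nonneg hℓ₂'.le h2]
    nlinarith
  have e4 : ℓ₂' * Δ' = ℓ₁ * H1 + ℓ₂ * Y := by
    have t1 : ℓ₂' * Δ' = a₁' * d - a * d₁' := by rw [ha', hd', hΔ']; ring
    have t2 : a₁' * d - a * d₁' = ℓ₁ * H1 + ℓ₂ * Y := by rw [ha, hd]; ring
    linarith
  have e5 : ℓ₁' * Δ' = ℓ₁ * X + ℓ₂ * H2 := by
    have t1 : ℓ₁' * Δ' = a * d₂' - a₂' * d := by rw [ha', hd', hΔ']; ring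
    have t2 : a * d₂' - a₂' * d = ℓ₁ * X + ℓ₂ * H2 := by rw [ha, hd]; ring
    linarith
  have hΔ'pos : 0 < Δ' := by
    have h : 0 < ℓ₂' * Δ' := by nlinarith [mul_nonneg hℓ₁.le h1, mul_pos hℓ₂ hYpos]
    nlinarith
  -- ring identity: X*Y - Δ'*Δ = H1*H2
  have e6 : X * Y = Δ' * Δ + H1 * H2 := by rw [hX, hY, hΔ, hΔ', hH1, hH2]; ring
  -- product of e4 and e5, together with ℓ₁'*ℓ₂' = ℓ₁*ℓ₂
  have e7 : ℓ₁ * ℓ₂ * (Δ' * Δ') = ℓ₁^2 * (H1 * X) + ℓ₂^2 * (H2 * Y) + ℓ₁ * ℓ₂ * (H1 * H2 + X * Y) := by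
    have p : (ℓ₂' * Δ') * (ℓ₁' * Δ') = (ℓ₁ * H1 + ℓ₂ * Y) * (ℓ₁ * X + ℓ₂ * H2) := by
      rw [e4, e5]
    have hll : ℓ₁' * ℓ₂' = ℓ₁ * ℓ₂ := by rw [hℓ, hℓ']
    linear_combination p - Δ' * Δ' * hll
  have e8 : ℓ₁ * ℓ₂ * (Δ' * (Δ' - Δ)) = ℓ₁^2 * (H1 * X) + ℓ₂^2 * (H2 * Y) + 2 * (ℓ₁ * ℓ₂) * (H1 * H2) := by
    linear_combination e7 + (ℓ₁ * ℓ₂) * e6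
  have key : 0 < Δ' * (Δ' - Δ) := by
    have hs : 0 < ℓ₁^2 * (H1 * X) + ℓ₂^2 * (H2 * Y) := by
      rcases hstrict with h | h
      · nlinarith [mul_pos (mul_pos hℓ₁ hℓ₁) (mul_pos h hXpos), mul_nonneg (mul_nonneg hℓ₂.le hℓ₂.le) (mul_nonneg h2 hYpos.le)]
      · nlinarith [mul_pos (mul_pos hℓ₂ hℓ₂) (mul_pos h hYpos), mul_nonneg (mul_nonneg hℓ₁.le hℓ₁.le) (mul_nonneg h1 hXpos.le)]
    have hh : 0 ≤ H1 * H2 := mul_nonneg h1 h2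
    have hll : 0 < ℓ₁ * ℓ₂ := mul_pos hℓ₁ hℓ₂
    have h9 : 0 < ℓ₁ * ℓ₂ * (Δ' * (Δ' - Δ)) := by nlinarith [mul_nonneg hll.le hh]
    nlinarith [h9, hll]
  constructor
  · nlinarith [key, hΔ'pos]
  · exact hΔpos
end

section
/- Let n, d, d₁, t₀, ε be positive reals and r, r₁, a, a₁ ∈ ℝ. Assume the wall condition a d₁ − a₁ d = n t₀² (r d₁ − r₁ d), and assume that for every t with t₀ < t < t₀ + ε one has (a − r n t²)/(2 n d t) > (a₁ − r₁ n t²)/(2 n d₁ t). Then r d₁ − r₁ d < 0 and a d₁ − a₁ d < 0. -/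
/-- Lemma 4.2 of the paper: if `(0, t₀H)` lies on the wall defined
by `(r₁, d₁, a₁)` and the subobject has strictly larger Bridgeland slope for
`t` just above `t₀`, then `rd₁ − r₁d < 0` and `ad₁ − a₁d < 0`. -/
theorem stmt6 (n d d₁ t₀ ε r r₁ a a₁ : ℝ)
    (hn : 0 < n) (hd : 0 < d) (hd₁ : 0 < d₁) (ht₀ : 0 < t₀) (hε : 0 < ε)
    (hwall : a * d₁ - a₁ * d = n * t₀ ^ 2 * (r * d₁ - r₁ * d))
    (hslope : ∀ t : ℝ, t₀ < t → t < t₀ + ε →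
      (a - r * n * t ^ 2) / (2 * n * d * t) > (a₁ - r₁ * n * t ^ 2) / (2 * n * d₁ * t)) :
    r * d₁ - r₁ * d < 0 ∧ a * d₁ - a₁ * d < 0 := by
  set t := t₀ + ε / 2 with ht
  have ht1 : t₀ < t := by simp [ht]; linarith
  have ht2 : t < t₀ + ε := by simp [ht]; linarith
  have htpos : 0 < t := by linarith
  have h := hslope t ht1 ht2
  rw [gt_iff_lt, div_lt_div_iff₀ (by positivity) (by positivity)] at h
  have h2nt : 0 < 2 * n * t := by positivity
  have key : n * t ^ 2 * (r * d₁ - r₁ * d) < a * d₁ - a₁ * d := by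
    rw [← mul_lt_mul_iff_of_pos_right h2nt]; nlinarith [h]
  have htt : t₀ ^ 2 < t ^ 2 := by nlinarith
  have hX : r * d₁ - r₁ * d < 0 := by nlinarith [mul_pos hn (sub_pos.mpr htt)]
  exact ⟨hX, by nlinarith [mul_pos hn (mul_pos ht₀ ht₀)]⟩
end
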